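/- For every integer n ≥ 1 and real numbers θ > 0, ρ > 0, γ ≥ 0, one has ∫₀¹ θ · e^{γx} · (1 − (1-x)^n) / (x · (1-x)^{1-ρ}) dx = θ · Σ_{k=0}^{n-1} 1/(k+ρ) + θ · Σ_{m=1}^∞ (γ^m / m) · ( 1/(ρ)_m − 1/(n+ρ)_m ), where the integral is over the open unit interval and in particular is finite. -/

import Mathlib

open scoped BigOperators
open MeasureTheory Set

/-- The real Pochhammer symbol `(a)_m = a (a+1) ⋯ (a+m-1)`. -/
noncomputable def pochR (a : ℝ) (m : ℕ) : ℝ := (ascPochhammer ℝ m).eval a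

namespace PangenomeAux

lemma pochR_one (a : ℝ) : pochR a 1 = a := by simp [pochR, ascPochhammer_one]

lemma pochR_succ_right (a : ℝ) (m : ℕ) : pochR a (m+1) = pochR a m * (a + m) := by
  simp [pochR, ascPochhammer_succ_right, Polynomial.eval_mul]

lemma pochR_succ_left (a : ℝ) (m : ℕ) : pochR a (m+1) = a * pochR (a+1) m := by
  simp [pochR, ascPochhammer_succ_left, Polynomial.eval_mul, Polynomial.eval_comp]

lemma pochR_pos {a : ℝ} (ha : 0 < a) (m : ℕ) : 0 < pochR a m := by
  induction m with
  | zero => simp [pochR]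
  | succ k ih => rw [pochR_succ_right]; positivity

lemma pochR_mono {a b : ℝ} (ha : 0 < a) (hab : a ≤ b) (m : ℕ) : pochR a m ≤ pochR b m := by
  induction m with
  | zero => simp [pochR]
  | succ k ih =>
      rw [pochR_succ_right, pochR_succ_right]
      have h1 : 0 < pochR a k := pochR_pos ha k
      have : (0:ℝ) < a + k := by positivity
      nlinarith

lemma pochR_ge (ρ : ℝ) (hρ : 0 < ρ) (k : ℕ) : ρ * k.factorial ≤ pochR ρ (k+1) := by
  induction k with
  | zero => simp [pochR_one]
  | succ k ih =>
      rw [pochR_succ_right]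
      have h2 : (0:ℝ) < pochR ρ (k+1) := pochR_pos hρ _
      have hf : (0:ℝ) < (k.factorial : ℝ) := by positivity
      push_cast [Nat.factorial_succ]
      calc ρ * ((k+1) * k.factorial) = (ρ * k.factorial) * (k+1) := by ring
        _ ≤ pochR ρ (k+1) * (ρ + (k+1)) := by nlinarith
        _ = pochR ρ (k+1) * (ρ + (↑k+1)) := by norm_num

lemma J_intervalInt {s : ℝ} (hs : 0 < s) :
    IntervalIntegrable (fun x : ℝ => (1 - x) ^ (s - 1)) volume 0 1 := by
  have h : IntervalIntegrable (fun x : ℝ => x ^ (s - 1)) volume 0 1 :=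
    intervalIntegral.intervalIntegrable_rpow' (by linarith)
  simpa using (h.comp_sub_left 1).symm

lemma J_integrableOn {s : ℝ} (hs : 0 < s) :
    IntegrableOn (fun x : ℝ => (1 - x) ^ (s - 1)) (Ioo 0 1) := by
  have := (J_intervalInt hs).1
  rw [integrableOn_Ioc_iff_integrableOn_Ioo] at this
  exact this

lemma J_integral {s : ℝ} (hs : 0 < s) :
    ∫ x in Ioo (0:ℝ) 1, (1 - x) ^ (s - 1) = 1 / s := by
  rw [← integral_Ioc_eq_integral_Ioo, ← intervalIntegral.integral_of_le (by norm_num : (0:ℝ) ≤ 1)]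
  rw [show (fun x : ℝ => (1 - x) ^ (s-1)) = (fun x : ℝ => ((fun y : ℝ => y ^ (s-1)) (1 - x))) from rfl]
  rw [intervalIntegral.integral_comp_sub_left (fun y : ℝ => y ^ (s-1)) 1]
  norm_num
  rw [integral_rpow (Or.inl (by linarith))]
  rw [Real.one_rpow, Real.zero_rpow (by linarith : s - 1 + 1 ≠ 0)]
  norm_num

lemma rpow_contOn (s : ℝ) : ContinuousOn (fun x : ℝ => (1 - x) ^ (s - 1)) (Ioo 0 1) :=
  ContinuousOn.rpow_const (by fun_prop)
    (fun x hx => Or.inl (by simp only [mem_Ioo] at hx; intro h; nlinarith [hx.2]))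

lemma beta_integrableOn (k : ℕ) {s : ℝ} (hs : 0 < s) :
    IntegrableOn (fun x : ℝ => x ^ k * (1 - x) ^ (s - 1)) (Ioo 0 1) := by
  refine (J_integrableOn hs).mono' ?_ ?_
  · exact ((continuousOn_pow k).mul (rpow_contOn s)).aestronglyMeasurable measurableSet_Ioo
  · filter_upwards [ae_restrict_mem measurableSet_Ioo] with x hx
    have hx0 : (0:ℝ) < x := hx.1
    have hx1 : (0:ℝ) < 1 - x := by linarith [hx.2]
    have h1 : (0:ℝ) ≤ (1-x) ^ (s-1) := Real.rpow_nonneg hx1.le _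
    have h2 : x ^ k ≤ 1 := pow_le_one₀ hx0.le (by linarith [hx.2])
    have h3 : (0:ℝ) ≤ x ^ k := by positivity
    rw [Real.norm_eq_abs, abs_of_nonneg (by positivity)]
    nlinarith

lemma beta_integral (k : ℕ) : ∀ s : ℝ, 0 < s →
    ∫ x in Ioo (0:ℝ) 1, x ^ k * (1 - x) ^ (s - 1) = k.factorial / pochR s (k+1) := by
  induction k with
  | zero =>
      intro s hs
      simp only [pow_zero, one_mul, Nat.factorial_zero, Nat.cast_one, zero_add, pochR_one]
      exact J_integral hs
  | succ k ih =>
      intro s hs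
      have hs1 : (0:ℝ) < s + 1 := by linarith
      have key : ∀ x ∈ Ioo (0:ℝ) 1,
          x ^ (k+1) * (1 - x) ^ (s - 1)
            = x ^ k * (1 - x) ^ (s - 1) - x ^ k * (1 - x) ^ ((s + 1) - 1) := by
        intro x hx
        have hx1 : (0:ℝ) < 1 - x := by linarith [hx.2]
        have e1 : (1 - x) ^ ((s+1) - 1) = (1 - x) ^ (s - 1) * (1 - x) := by
          rw [show (s+1) - 1 = (s - 1) + 1 by ring, Real.rpow_add_one hx1.ne']
        rw [e1]; ring
      rw [setIntegral_congr_fun measurableSet_Ioo key,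
        integral_sub (beta_integrableOn k hs) (beta_integrableOn k hs1),
        ih s hs, ih (s+1) hs1]
      have hA : (0:ℝ) < pochR s (k+1) := pochR_pos hs _
      have hB : (0:ℝ) < pochR (s+1) (k+1) := pochR_pos hs1 _
      have hP : (0:ℝ) < pochR s (k+2) := pochR_pos hs _
      have hQ : (0:ℝ) < pochR (s+1) k := pochR_pos hs1 _
      have e1 : pochR s (k+1) = s * pochR (s+1) k := pochR_succ_left s k
      have e2 : pochR (s+1) (k+1) = pochR (s+1) k * (s + 1 + k) := pochR_succ_right _ _
      have e3 : pochR s (k+2) = pochR s (k+1) * (s + (k+1)) := by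
        rw [pochR_succ_right]; push_cast; ring_nf
      have hfact : ((k+1).factorial : ℝ) = (k+1) * k.factorial := by
        rw [Nat.factorial_succ]; push_cast; ring
      rw [hfact, e3, e1, e2]
      field_simp
      ring

end PangenomeAux

open PangenomeAux

set_option maxHeartbeats 1000000 in
/-- For `n ≥ 1`, `θ > 0`, `ρ > 0`, `γ ≥ 0`, the Poisson random field integral for the
expected accessory genome size is finite and
`∫₀¹ θ e^{γx} (1-(1-x)^n)/(x (1-x)^{1-ρ}) dx
  = θ Σ_{k=0}^{n-1} 1/(k+ρ) + θ Σ_{m≥1} (γ^m/m)(1/(ρ)_m − 1/(n+ρ)_m)`. -/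
theorem expected_pangenome_size_integral
    (n : ℕ) (hn : 1 ≤ n) (θ ρ γ : ℝ) (hθ : 0 < θ) (hρ : 0 < ρ) (hγ : 0 ≤ γ) :
    MeasureTheory.IntegrableOn
      (fun x : ℝ => θ * Real.exp (γ * x) * (1 - (1 - x) ^ n) / (x * (1 - x) ^ (1 - ρ)))
      (Set.Ioo 0 1) ∧
    ∫ x in Set.Ioo (0 : ℝ) 1,
        θ * Real.exp (γ * x) * (1 - (1 - x) ^ n) / (x * (1 - x) ^ (1 - ρ)) =
      θ * ∑ k ∈ Finset.range n, 1 / ((k : ℝ) + ρ) +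
        θ * ∑' m : ℕ,
          γ ^ (m + 1) / (m + 1) *
            (1 / pochR ρ (m + 1) - 1 / pochR ((n : ℝ) + ρ) (m + 1)) := by
  have hnρ : (0:ℝ) < (n : ℝ) + ρ := add_pos_of_nonneg_of_pos (Nat.cast_nonneg n) hρ
  have hjρ : ∀ j : ℕ, (0:ℝ) < (j:ℝ) + ρ := fun j => add_pos_of_nonneg_of_pos (Nat.cast_nonneg j) hρ
  set F : ℝ → ℝ :=
    fun x : ℝ => θ * Real.exp (γ * x) * (1 - (1 - x) ^ n) / (x * (1 - x) ^ (1 - ρ)) with hF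
  set G : ℝ → ℝ := fun x : ℝ => θ * (1 - (1 - x) ^ n) / (x * (1 - x) ^ (1 - ρ)) with hGdef
  set f : ℕ → ℝ → ℝ := fun m x => (γ * x) ^ m / m.factorial * G x with hfdef
  -- expansion of G on Ioo
  have hG : ∀ x ∈ Ioo (0:ℝ) 1,
      G x = θ * ∑ j ∈ Finset.range n, (1 - x) ^ ((j:ℝ) + ρ - 1) := by
    intro x hx
    have hx0 : (0:ℝ) < x := hx.1
    have hx1 : (0:ℝ) < 1 - x := by linarith [hx.2]
    have hB : (0:ℝ) < (1-x) ^ (1-ρ) := Real.rpow_pos_of_pos hx1 _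
    have hgeom : 1 - (1 - x) ^ n = x * ∑ j ∈ Finset.range n, (1-x)^j := by
      have := geom_sum_mul (1 - x) n
      nlinarith [this]
    have hterm : ∀ j : ℕ, ((1-x):ℝ)^j * (1-x) ^ (ρ - 1) = (1-x) ^ ((j:ℝ) + ρ - 1) := by
      intro j
      rw [← Real.rpow_natCast (1-x) j, ← Real.rpow_add hx1]
      congr 1; ring
    have hBinv : ((1-x) ^ (1-ρ))⁻¹ = (1-x) ^ (ρ - 1) := by
      rw [← Real.rpow_neg hx1.le]; congr 1; ring
    calc G x = θ * (x * ∑ j ∈ Finset.range n, (1-x)^j) / (x * (1-x)^(1-ρ)) := by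
          simp only [hGdef]; rw [hgeom]
      _ = θ * ((∑ j ∈ Finset.range n, (1-x)^j) * ((1-x)^(1-ρ))⁻¹) := by
          field_simp
      _ = θ * ∑ j ∈ Finset.range n, (1-x)^j * (1-x)^(ρ-1) := by
          rw [hBinv, Finset.sum_mul]
      _ = θ * ∑ j ∈ Finset.range n, (1 - x) ^ ((j:ℝ) + ρ - 1) := by
          congr 1; exact Finset.sum_congr rfl fun j _ => hterm j
  -- pointwise rewriting of f m on Ioo
  have hf0 : ∀ x ∈ Ioo (0:ℝ) 1,
      f 0 x = θ * ∑ j ∈ Finset.range n, (1 - x) ^ ((j:ℝ) + ρ - 1) := by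
    intro x hx
    simp only [hfdef, pow_zero, Nat.factorial_zero, Nat.cast_one, div_one, one_mul]
    exact hG x hx
  have hfs : ∀ m : ℕ, ∀ x ∈ Ioo (0:ℝ) 1,
      f (m+1) x = θ * γ ^ (m+1) / (m+1).factorial *
        (x ^ m * (1-x) ^ (ρ - 1) - x ^ m * (1-x) ^ ((n:ℝ) + ρ - 1)) := by
    intro m x hx
    have hx0 : (0:ℝ) < x := hx.1
    have hx1 : (0:ℝ) < 1 - x := by linarith [hx.2]
    have hB : (0:ℝ) < (1-x) ^ (1-ρ) := Real.rpow_pos_of_pos hx1 _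
    have hBinv : ((1-x) ^ (1-ρ))⁻¹ = (1-x) ^ (ρ - 1) := by
      rw [← Real.rpow_neg hx1.le]; congr 1; ring
    have hn1 : ((1-x):ℝ)^n * (1-x) ^ (ρ - 1) = (1-x) ^ ((n:ℝ) + ρ - 1) := by
      rw [← Real.rpow_natCast (1-x) n, ← Real.rpow_add hx1]
      congr 1; ring
    have hBne : ((1-x) ^ (1-ρ)) ≠ 0 := hB.ne'
    have hxne : x ≠ 0 := hx0.ne'
    have hfacne : (((m+1).factorial : ℕ) : ℝ) ≠ 0 := by positivity
    simp only [hfdef, hGdef]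
    rw [← hn1, ← hBinv]
    field_simp
    ring
  -- F = exp * G, and F = ∑' f m on Ioo
  have hFG : ∀ x : ℝ, F x = Real.exp (γ * x) * G x := by
    intro x; simp only [hF, hGdef]; ring
  have hexp : ∀ y : ℝ, Real.exp y = ∑' m : ℕ, y ^ m / m.factorial := by
    intro y
    rw [Real.exp_eq_exp_ℝ, NormedSpace.exp_eq_tsum_div]
  have hFf : ∀ x ∈ Ioo (0:ℝ) 1, F x = ∑' m : ℕ, f m x := by
    intro x hx
    rw [hFG, hexp]
    rw [← tsum_mul_right]
  -- nonnegativity of f m on Ioo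
  have hfnn : ∀ m : ℕ, ∀ x ∈ Ioo (0:ℝ) 1, 0 ≤ f m x := by
    intro m x hx
    have hx0 : (0:ℝ) < x := hx.1
    have hGnn : 0 ≤ G x := by
      rw [hG x hx]
      have : 0 ≤ ∑ j ∈ Finset.range n, (1 - x) ^ ((j:ℝ) + ρ - 1) :=
        Finset.sum_nonneg fun j _ => Real.rpow_nonneg (by linarith [hx.2]) _
      positivity
    have : (0:ℝ) ≤ (γ * x) ^ m := pow_nonneg (by positivity) m
    have hfac : (0:ℝ) < (m.factorial : ℝ) := by positivity
    simp only [hfdef]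
    positivity
  -- integrability of each f m
  have hfcont : ∀ m : ℕ, ContinuousOn (f m) (Ioo 0 1) := by
    intro m
    apply ContinuousOn.mul (by fun_prop)
    apply ContinuousOn.div (by fun_prop)
    · exact (continuousOn_id.mul (ContinuousOn.rpow_const (by fun_prop)
        (fun x hx => Or.inl (by simp only [mem_Ioo] at hx; intro h; nlinarith [hx.2]))))
    · intro x hx
      simp only [mem_Ioo] at hx
      have h1 : (0:ℝ) < 1 - x := by linarith [hx.2]
      exact ne_of_gt (mul_pos hx.1 (Real.rpow_pos_of_pos h1 _))
  have hint0 : IntegrableOn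
      (fun x : ℝ => θ * ∑ j ∈ Finset.range n, (1 - x) ^ ((j:ℝ) + ρ - 1)) (Ioo 0 1) := by
    apply Integrable.const_mul
    apply integrable_finset_sum
    intro j _
    exact J_integrableOn (hjρ j)
  have hfint : ∀ m : ℕ, IntegrableOn (f m) (Ioo 0 1) := by
    intro m
    match m with
    | 0 => exact hint0.congr_fun (fun x hx => (hf0 x hx).symm) measurableSet_Ioo
    | m+1 =>
        have : IntegrableOn (fun x : ℝ => θ * γ ^ (m+1) / (m+1).factorial *
            (x ^ m * (1-x) ^ (ρ - 1) - x ^ m * (1-x) ^ ((n:ℝ) + ρ - 1))) (Ioo 0 1) :=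
          (((beta_integrableOn m hρ).sub (beta_integrableOn m hnρ)).const_mul _)
        exact this.congr_fun (fun x hx => (hfs m x hx).symm) measurableSet_Ioo
  -- integral values
  have hI0 : ∫ x in Ioo (0:ℝ) 1, f 0 x = θ * ∑ k ∈ Finset.range n, 1 / ((k : ℝ) + ρ) := by
    rw [setIntegral_congr_fun measurableSet_Ioo hf0, integral_const_mul]
    congr 1
    rw [integral_finset_sum (Finset.range n) (fun j _ => J_integrableOn (hjρ j))]
    exact Finset.sum_congr rfl fun j _ => J_integral (hjρ j)
  have hIs : ∀ m : ℕ, ∫ x in Ioo (0:ℝ) 1, f (m+1) x =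
      θ * (γ ^ (m + 1) / (m + 1) *
        (1 / pochR ρ (m + 1) - 1 / pochR ((n : ℝ) + ρ) (m + 1))) := by
    intro m
    rw [setIntegral_congr_fun measurableSet_Ioo (hfs m), integral_const_mul,
      integral_sub (beta_integrableOn m hρ) (beta_integrableOn m hnρ),
      beta_integral m ρ hρ, beta_integral m _ hnρ]
    have hA : (0:ℝ) < pochR ρ (m+1) := pochR_pos hρ _
    have hB : (0:ℝ) < pochR ((n:ℝ)+ρ) (m+1) := pochR_pos hnρ _
    have hfac : ((m+1).factorial : ℝ) = (m+1) * m.factorial := by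
      rw [Nat.factorial_succ]; push_cast; ring
    have hfacm : (0:ℝ) < (m.factorial : ℝ) := by positivity
    rw [hfac]
    field_simp
  -- the integral sequence and its summability
  set c : ℕ → ℝ := fun m => ∫ x in Ioo (0:ℝ) 1, f m x with hcdef
  have hcnn : ∀ m, 0 ≤ c m := by
    intro m
    show 0 ≤ ∫ x in Ioo (0:ℝ) 1, f m x
    apply setIntegral_nonneg measurableSet_Ioo
    intro x hx
    exact hfnn m x hx
  have hcsle : ∀ m : ℕ, c (m+1) ≤ θ / ρ * (γ ^ (m+1) / (m+1).factorial) := by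
    intro m
    show (∫ x in Ioo (0:ℝ) 1, f (m+1) x) ≤ θ / ρ * (γ ^ (m+1) / (m+1).factorial)
    rw [hIs m]
    have hA : (0:ℝ) < pochR ρ (m+1) := pochR_pos hρ _
    have hB : (0:ℝ) < pochR ((n:ℝ)+ρ) (m+1) := pochR_pos hnρ _
    have hAB : pochR ρ (m+1) ≤ pochR ((n:ℝ)+ρ) (m+1) :=
      pochR_mono hρ (by linarith) _
    have h1 : 1 / pochR ((n:ℝ)+ρ) (m+1) ≤ 1 / pochR ρ (m+1) :=
      one_div_le_one_div_of_le hA hAB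
    have h2 : 1 / pochR ρ (m+1) - 1 / pochR ((n:ℝ)+ρ) (m+1) ≤ 1 / pochR ρ (m+1) := by
      have : 0 < 1 / pochR ((n:ℝ)+ρ) (m+1) := by positivity
      linarith
    have hge : ρ * m.factorial ≤ pochR ρ (m+1) := pochR_ge ρ hρ m
    have hfacm : (0:ℝ) < (m.factorial : ℝ) := by positivity
    have h3 : 1 / pochR ρ (m+1) ≤ 1 / (ρ * m.factorial) :=
      one_div_le_one_div_of_le (by positivity) hge
    have hγm : (0:ℝ) ≤ γ ^ (m+1) := pow_nonneg hγ _
    have hm1 : (0:ℝ) < (m:ℝ) + 1 := by positivity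
    have hfact : ((m+1).factorial : ℝ) = ((m:ℝ)+1) * m.factorial := by
      rw [Nat.factorial_succ]; push_cast; ring
    have key : γ ^ (m + 1) / ((m:ℝ) + 1) *
        (1 / pochR ρ (m + 1) - 1 / pochR ((n : ℝ) + ρ) (m + 1))
        ≤ γ ^ (m+1) / ((m:ℝ)+1) * (1 / (ρ * m.factorial)) := by
      apply mul_le_mul_of_nonneg_left (le_trans h2 h3) (by positivity)
    calc θ * (γ ^ (m + 1) / (↑m + 1) *
          (1 / pochR ρ (m + 1) - 1 / pochR ((n : ℝ) + ρ) (m + 1)))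
        ≤ θ * (γ ^ (m+1) / ((m:ℝ)+1) * (1 / (ρ * m.factorial))) := by
          apply mul_le_mul_of_nonneg_left key hθ.le
      _ = θ / ρ * (γ ^ (m+1) / (m+1).factorial) := by
          rw [hfact]; field_simp; try ring
          try simp
  have hsum_aux : Summable (fun m : ℕ => θ / ρ * (γ ^ (m+1) / (m+1).factorial)) :=
    Summable.mul_left _ ((summable_nat_add_iff 1).2 (Real.summable_pow_div_factorial γ))
  have hcsum : Summable c := by
    rw [← summable_nat_add_iff 1]
    exact Summable.of_nonneg_of_le (fun m => hcnn (m+1)) (fun m => hcsle m) hsum_aux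
  -- integrability of F
  have hFcont : ContinuousOn F (Ioo 0 1) := by
    apply ContinuousOn.div (by fun_prop)
    · exact (continuousOn_id.mul (ContinuousOn.rpow_const (by fun_prop)
        (fun x hx => Or.inl (by simp only [mem_Ioo] at hx; intro h; nlinarith [hx.2]))))
    · intro x hx
      simp only [mem_Ioo] at hx
      have h1 : (0:ℝ) < 1 - x := by linarith [hx.2]
      exact ne_of_gt (mul_pos hx.1 (Real.rpow_pos_of_pos h1 _))
  have hFint : IntegrableOn F (Ioo 0 1) := by
    apply Integrable.mono' (hint0.const_mul (Real.exp γ))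
      (hFcont.aestronglyMeasurable measurableSet_Ioo)
    filter_upwards [ae_restrict_mem measurableSet_Ioo] with x hx
    have hx0 : (0:ℝ) < x := hx.1
    have hGnn : 0 ≤ G x := by
      rw [hG x hx]
      have : 0 ≤ ∑ j ∈ Finset.range n, (1 - x) ^ ((j:ℝ) + ρ - 1) :=
        Finset.sum_nonneg fun j _ => Real.rpow_nonneg (by linarith [hx.2]) _
      positivity
    have hFnn : 0 ≤ F x := by
      rw [hFG]; positivity
    rw [Real.norm_eq_abs, abs_of_nonneg hFnn, hFG]
    have hexple : Real.exp (γ * x) ≤ Real.exp γ := by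
      apply Real.exp_le_exp.2
      nlinarith [hx.2]
    have hsum_nn : 0 ≤ θ * ∑ j ∈ Finset.range n, (1 - x) ^ ((j:ℝ) + ρ - 1) := by
      rw [← hG x hx]; exact hGnn
    calc Real.exp (γ * x) * G x ≤ Real.exp γ * G x := by
          apply mul_le_mul_of_nonneg_right hexple hGnn
      _ = Real.exp γ * (θ * ∑ j ∈ Finset.range n, (1 - x) ^ ((j:ℝ) + ρ - 1)) := by
          rw [hG x hx]
  refine ⟨hFint, ?_⟩
  -- swap integral and tsum
  have hlin : ∀ m : ℕ, ∫⁻ x, ‖f m x‖ₑ ∂(volume.restrict (Ioo (0:ℝ) 1)) =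
      ENNReal.ofReal (c m) := by
    intro m
    have h1 : ∫⁻ x, ‖f m x‖ₑ ∂(volume.restrict (Ioo (0:ℝ) 1)) =
        ∫⁻ x, ENNReal.ofReal (f m x) ∂(volume.restrict (Ioo (0:ℝ) 1)) := by
      apply lintegral_congr_ae
      filter_upwards [ae_restrict_mem measurableSet_Ioo] with x hx
      exact Real.enorm_eq_ofReal (hfnn m x hx)
    rw [h1]
    rw [← ofReal_integral_eq_lintegral_ofReal (hfint m)]
    filter_upwards [ae_restrict_mem measurableSet_Ioo] with x hx
    exact hfnn m x hx
  have hswap : ∫ x in Ioo (0:ℝ) 1, (∑' m : ℕ, f m x) = ∑' m : ℕ, c m := by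
    apply integral_tsum
    · intro m
      exact (hfcont m).aestronglyMeasurable measurableSet_Ioo
    · simp_rw [hlin]
      rw [← ENNReal.ofReal_tsum_of_nonneg hcnn hcsum]
      exact ENNReal.ofReal_ne_top
  calc ∫ x in Ioo (0:ℝ) 1, F x
      = ∫ x in Ioo (0:ℝ) 1, (∑' m : ℕ, f m x) :=
        setIntegral_congr_fun measurableSet_Ioo hFf
    _ = ∑' m : ℕ, c m := hswap
    _ = c 0 + ∑' m : ℕ, c (m+1) := hcsum.tsum_eq_zero_add
    _ = θ * ∑ k ∈ Finset.range n, 1 / ((k : ℝ) + ρ) +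
        θ * ∑' m : ℕ, γ ^ (m + 1) / (m + 1) *
          (1 / pochR ρ (m + 1) - 1 / pochR ((n : ℝ) + ρ) (m + 1)) := by
        rw [show c 0 = θ * ∑ k ∈ Finset.range n, 1 / ((k : ℝ) + ρ) from hI0]
        congr 1
        rw [tsum_congr hIs, tsum_mul_left]
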